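/- Let 1 ≤ s < r < ∞, c = √(s/r), and X a complex Banach space. Assume the one-variable contraction: for all X-valued analytic polynomials g on 𝕋, ‖z ↦ g(cz)‖_{L^r(𝕋,X)} ≤ ‖g‖_{L^s(𝕋,X)}. Then for all N and all X-valued analytic polynomials f on 𝕋^N (finite sums ∑_α x_α z^α over α ∈ ℕ₀^N), ‖z ↦ f(cz₁,…,cz_N)‖_{L^r(𝕋^N,X)} ≤ ‖f‖_{L^s(𝕋^N,X)}. -/

import Mathlib

open MeasureTheory

/-- The point `e^{2πit}` on the unit circle `𝕋 ⊆ ℂ`. -/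
noncomputable def torus (t : ℝ) : ℂ := Complex.exp (2 * Real.pi * Complex.I * t)

/-- The unit cube `[0,1]^N`, parametrizing `𝕋^N` (with normalized Haar measure = volume). -/
def cube (N : ℕ) : Set (Fin N → ℝ) := Set.univ.pi fun _ => Set.Icc (0:ℝ) 1

namespace WeisslerAux

open ENNReal Set

noncomputable abbrev μ1 : Measure ℝ := volume.restrict (Set.Icc (0:ℝ) 1)

noncomputable abbrev μp (N : ℕ) : Measure (Fin N → ℝ) := Measure.pi fun _ => μ1

lemma minkowski_lintegral {α β : Type*} [MeasurableSpace α] [MeasurableSpace β]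
    (μ : Measure α) (ν : Measure β) [IsFiniteMeasure μ] [IsFiniteMeasure ν]
    {F : α → β → ℝ≥0∞} (hF : Measurable (Function.uncurry F))
    (M : ℝ≥0∞) (hM : M ≠ ⊤) (hFb : ∀ a b, F a b ≤ M) {p : ℝ} (hp : 1 ≤ p) :
    (∫⁻ b, (∫⁻ a, F a b ∂μ) ^ p ∂ν) ^ (1/p)
      ≤ ∫⁻ a, (∫⁻ b, F a b ^ p ∂ν) ^ (1/p) ∂μ := by
  have hFm : ∀ a, Measurable (F a) := fun a => hF.comp (measurable_prodMk_left)
  have hFm' : ∀ b, Measurable (fun a => F a b) := fun b => hF.comp (measurable_prodMk_right)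
  have hφ : Measurable (fun b => ∫⁻ a, F a b ∂μ) := Measurable.lintegral_prod_left hF
  rcases eq_or_lt_of_le hp with rfl | hp1
  · simp only [ENNReal.rpow_one, one_div_one]
    rw [lintegral_lintegral_swap (hF.aemeasurable)]
  · set q : ℝ := p / (p - 1) with hq
    have hpq : p.HolderConjugate q := Real.HolderConjugate.conjExponent hp1
    have hp0 : (0:ℝ) < p := lt_trans one_pos hp1
    set φ : β → ℝ≥0∞ := fun b => ∫⁻ a, F a b ∂μ with hφdef
    set I : ℝ≥0∞ := ∫⁻ b, φ b ^ p ∂ν with hI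
    set R : ℝ≥0∞ := ∫⁻ a, (∫⁻ b, F a b ^ p ∂ν) ^ (1/p) ∂μ with hR
    have hφb : ∀ b, φ b ≤ M * μ Set.univ := fun b => by
      calc φ b ≤ ∫⁻ _, M ∂μ := lintegral_mono (fun a => hFb a b)
      _ = M * μ Set.univ := lintegral_const M
    have hIfin : I ≠ ⊤ := by
      have hle : I ≤ (M * μ Set.univ) ^ p * ν Set.univ := by
        calc I ≤ ∫⁻ _, (M * μ Set.univ) ^ p ∂ν :=
          lintegral_mono fun b => ENNReal.rpow_le_rpow (hφb b) hp0.le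
        _ = _ := lintegral_const _
      exact ne_top_of_le_ne_top (ENNReal.mul_ne_top (ENNReal.rpow_ne_top_of_nonneg hp0.le
          (ENNReal.mul_ne_top hM (measure_ne_top μ _))) (measure_ne_top ν _)) hle
    rcases eq_or_ne I 0 with hI0 | hI0
    · rw [hI0, one_div, ENNReal.zero_rpow_of_pos (inv_pos.mpr hp0)]
      exact zero_le
    · -- main case
      have hq0 : (0:ℝ) < q := hpq.symm.pos
      have hsplitfun : ∀ x : ℝ≥0∞, x ^ p = x * x ^ (p-1) := fun x => by
        nth_rewrite 1 [show p = 1 + (p - 1) by ring]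
        rw [ENNReal.rpow_add_of_nonneg 1 (p-1) zero_le_one (by linarith : (0:ℝ) ≤ p - 1),
          ENNReal.rpow_one]
      have key : I ≤ R * I ^ (1/q) := by
        have hmeas : AEMeasurable (Function.uncurry fun a b => F a b * φ b ^ (p-1)) (μ.prod ν) :=
          (hF.mul ((hφ.pow_const (p-1)).comp measurable_snd)).aemeasurable
        have hswap := lintegral_lintegral_swap (μ := μ) (ν := ν)
          (f := fun a b => F a b * φ b ^ (p-1)) hmeas
        have e1 : I = ∫⁻ a, ∫⁻ b, F a b * φ b ^ (p-1) ∂ν ∂μ := by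
          rw [hswap]
          refine lintegral_congr fun b => ?_
          rw [lintegral_mul_const'' _ (hFm' b).aemeasurable]
          exact hsplitfun (φ b)
        have e2 : ∀ a, ∫⁻ b, F a b * φ b ^ (p-1) ∂ν
            ≤ (∫⁻ b, F a b ^ p ∂ν) ^ (1/p) * I ^ (1/q) := by
          intro a
          have hold := ENNReal.lintegral_mul_le_Lp_mul_Lq ν hpq (hFm a).aemeasurable
            ((hφ.pow_const (p-1)).aemeasurable)
          refine le_trans hold ?_
          have hexp : ∀ b, (φ b ^ (p-1)) ^ q = φ b ^ p := fun b => by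
            rw [← ENNReal.rpow_mul]
            congr 1
            rw [hq, mul_comm, div_mul_cancel₀ _ (by linarith : p - 1 ≠ 0)]
          simp only [hexp, ← hI]
          exact le_rfl
        have hmeas2 : Measurable fun a => ∫⁻ b, F a b ^ p ∂ν :=
          Measurable.lintegral_prod_right (f := fun a b => F a b ^ p) (hF.pow_const p)
        calc I = ∫⁻ a, ∫⁻ b, F a b * φ b ^ (p-1) ∂ν ∂μ := e1
          _ ≤ ∫⁻ a, (∫⁻ b, F a b ^ p ∂ν) ^ (1/p) * I ^ (1/q) ∂μ := lintegral_mono e2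
          _ = R * I ^ (1/q) :=
            lintegral_mul_const'' _ ((hmeas2.pow_const (1/p)).aemeasurable)
      have hIq_ne_top : I ^ (1/q) ≠ ⊤ :=
        ENNReal.rpow_ne_top_of_nonneg (by positivity) hIfin
      have hIq_ne_zero : I ^ (1/q) ≠ 0 := by
        simp only [ne_eq, ENNReal.rpow_eq_zero_iff, not_or, not_and]
        exact ⟨fun h0 => absurd h0 hI0, fun htop => absurd htop hIfin⟩
      have hsplit : I = I ^ (1/p) * I ^ (1/q) := by
        rw [← ENNReal.rpow_add_of_nonneg (1/p) (1/q) (by positivity) (by positivity)]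
        rw [show 1/p + 1/q = 1 by
          have := hpq.inv_add_inv_eq_inv; rw [one_div, one_div]; rw [inv_one] at this; linarith]
        rw [ENNReal.rpow_one]
      have key2 : I ^ (1/p) * I ^ (1/q) ≤ R * I ^ (1/q) := hsplit ▸ key
      exact (ENNReal.mul_le_mul_iff_left hIq_ne_zero hIq_ne_top).mp key2

instance : IsProbabilityMeasure μ1 :=
  ⟨by rw [Measure.restrict_apply_univ, Real.volume_Icc]; norm_num⟩

instance (N : ℕ) : IsProbabilityMeasure (μp N) := Measure.pi.instIsProbabilityMeasure _

lemma norm_torus (t : ℝ) : ‖torus t‖ = 1 := by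
  have h : (2 * Real.pi * Complex.I * t) = ((2 * Real.pi * t : ℝ) : ℂ) * Complex.I := by
    push_cast; ring
  rw [torus, Complex.norm_exp, h]
  simp

lemma continuous_torus : Continuous torus :=
  Complex.continuous_exp.comp (continuous_const.mul Complex.continuous_ofReal)

lemma restrict_cube (N : ℕ) : volume.restrict (cube N) = μp N := by
  refine (Measure.pi_eq (μ := fun _ : Fin N => μ1) (μ' := volume.restrict (cube N)) fun s hs => ?_).symm
  rw [Measure.restrict_apply (MeasurableSet.univ_pi hs), cube,
    ← Set.pi_inter_distrib, volume_pi_pi]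
  exact Finset.prod_congr rfl fun i _ => (Measure.restrict_apply (hs i)).symm


variable {X : Type*} [NormedAddCommGroup X] [NormedSpace ℂ X]

/-- The general polynomial with per-coordinate dilation `d`. -/
noncomputable def poly (N : ℕ) (d : Fin N → ℝ) (A : Finset (Fin N → ℕ))
    (x : (Fin N → ℕ) → X) (t : Fin N → ℝ) : X :=
  ∑ α ∈ A, (∏ j, ((d j : ℂ) * torus (t j)) ^ α j) • x α

lemma continuous_poly (N : ℕ) (d : Fin N → ℝ) (A : Finset (Fin N → ℕ))
    (x : (Fin N → ℕ) → X) : Continuous (poly N d A x) := by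
  refine continuous_finset_sum _ fun α _ => Continuous.smul ?_ continuous_const
  exact continuous_finset_prod _ fun j _ =>
    ((continuous_const.mul (continuous_torus.comp (continuous_apply j))).pow _)

lemma norm_sum_smul_le {ι : Type*} (F : Finset ι) (a : ι → ℂ) (x : ι → X)
    (ha : ∀ i ∈ F, ‖a i‖ ≤ 1) : ‖∑ i ∈ F, a i • x i‖ ≤ ∑ i ∈ F, ‖x i‖ := by
  refine le_trans (norm_sum_le _ _) (Finset.sum_le_sum fun i hi => ?_)
  rw [norm_smul]
  exact mul_le_of_le_one_left (norm_nonneg _) (ha i hi)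

lemma norm_poly_le (N : ℕ) (d : Fin N → ℝ) (hd : ∀ j, |d j| ≤ 1) (A : Finset (Fin N → ℕ))
    (x : (Fin N → ℕ) → X) (t : Fin N → ℝ) : ‖poly N d A x t‖ ≤ ∑ α ∈ A, ‖x α‖ := by
  refine norm_sum_smul_le _ _ _ fun α _ => ?_
  rw [norm_prod]
  refine Finset.prod_le_one (fun j _ => norm_nonneg _) fun j _ => ?_
  rw [norm_pow]
  refine pow_le_one₀ (norm_nonneg _) ?_
  rw [norm_mul, norm_torus, mul_one, Complex.norm_real]
  exact hd j

lemma regroup {γ : Type*} [DecidableEq γ] {N : ℕ} (A : Finset (Fin N → ℕ))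
    (x : (Fin N → ℕ) → X) (m : (Fin N → ℕ) → γ) (a : γ → ℂ) (b : (Fin N → ℕ) → ℂ) :
    ∑ α ∈ A, (a (m α) * b α) • x α
      = ∑ k ∈ A.image m, a k • ∑ α ∈ A.filter (fun α => m α = k), b α • x α := by
  rw [← Finset.sum_fiberwise_of_maps_to (fun α hα => Finset.mem_image_of_mem m hα)
    (fun α => (a (m α) * b α) • x α)]
  refine Finset.sum_congr rfl fun k hk => ?_
  rw [Finset.smul_sum]
  refine Finset.sum_congr rfl fun α hα => ?_
  rw [Finset.mem_filter] at hα
  rw [← smul_smul, hα.2]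

lemma poly_cons (N : ℕ) (d : Fin (N+1) → ℝ) (A : Finset (Fin (N+1) → ℕ))
    (x : (Fin (N+1) → ℕ) → X) (w : ℝ) (z : Fin N → ℝ) :
    poly (N+1) d A x (Fin.cons w z)
      = ∑ α ∈ A, (((d 0 : ℂ) * torus w) ^ (α 0)
          * ∏ j, ((d j.succ : ℂ) * torus (z j)) ^ (α j.succ)) • x α := by
  refine Finset.sum_congr rfl fun α _ => ?_
  congr 1
  rw [Fin.prod_univ_succ]
  simp [Fin.cons_zero, Fin.cons_succ]

lemma key1 (N : ℕ) (d : Fin (N+1) → ℝ) (A : Finset (Fin (N+1) → ℕ))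
    (x : (Fin (N+1) → ℕ) → X) (w : ℝ) (z : Fin N → ℝ) :
    poly (N+1) d A x (Fin.cons w z)
      = ∑ k ∈ A.image (fun α => α 0), ((d 0 : ℂ) * torus w) ^ k •
          ∑ α ∈ A.filter (fun α => α 0 = k),
            (∏ j, ((d j.succ : ℂ) * torus (z j)) ^ (α j.succ)) • x α := by
  rw [poly_cons]
  exact regroup A x (fun α => α 0) (fun k => ((d 0 : ℂ) * torus w) ^ k)
    (fun α => ∏ j, ((d j.succ : ℂ) * torus (z j)) ^ (α j.succ))

lemma key2 (N : ℕ) (d : Fin (N+1) → ℝ) (A : Finset (Fin (N+1) → ℕ))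
    (x : (Fin (N+1) → ℕ) → X) (w : ℝ) (z : Fin N → ℝ) :
    poly (N+1) d A x (Fin.cons w z)
      = ∑ β ∈ A.image Fin.tail, (∏ j, ((d j.succ : ℂ) * torus (z j)) ^ (β j)) •
          ∑ α ∈ A.filter (fun α => Fin.tail α = β),
            ((d 0 : ℂ) * torus w) ^ (α 0) • x α := by
  rw [poly_cons]
  have : ∀ α ∈ A, (((d 0 : ℂ) * torus w) ^ (α 0)
      * ∏ j, ((d j.succ : ℂ) * torus (z j)) ^ (α j.succ)) • x α
      = ((∏ j, ((d j.succ : ℂ) * torus (z j)) ^ (Fin.tail α j))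
          * ((d 0 : ℂ) * torus w) ^ (α 0)) • x α := by
    intro α _
    rw [mul_comm]
    rfl
  rw [Finset.sum_congr rfl this]
  exact regroup A x Fin.tail (fun β => ∏ j, ((d j.succ : ℂ) * torus (z j)) ^ (β j))
    (fun α => ((d 0 : ℂ) * torus w) ^ (α 0))

lemma measurable_cons_comp {N : ℕ} {f : (Fin (N+1) → ℝ) → ℝ≥0∞} (hf : Measurable f) :
    Measurable fun p : ℝ × (Fin N → ℝ) => f (Fin.cons p.1 p.2) := by
  refine hf.comp ?_
  refine measurable_pi_iff.mpr fun j => ?_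
  refine Fin.cases ?_ (fun i => ?_) j
  · exact measurable_fst
  · exact (measurable_pi_apply i).comp measurable_snd

lemma lint_cons (N : ℕ) (f : (Fin (N+1) → ℝ) → ℝ≥0∞) (hf : Measurable f) :
    ∫⁻ t, f t ∂ μp (N+1) = ∫⁻ w, ∫⁻ z, f (Fin.cons w z) ∂ μp N ∂ μ1 := by
  have h := (measurePreserving_piFinSuccAbove (fun _ : Fin (N+1) => μ1) 0).symm
  rw [← h.lintegral_comp hf]
  rw [lintegral_prod (fun a => f ((MeasurableEquiv.piFinSuccAbove (fun _ => ℝ) 0).symm a))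
    (Measurable.aemeasurable (hf.comp h.measurable))]
  refine lintegral_congr fun w => lintegral_congr fun z => ?_
  congr 1
  simp [MeasurableEquiv.piFinSuccAbove_symm_apply, Fin.insertNthEquiv, Fin.insertNth_zero']

lemma conv {α : Type*} [MeasurableSpace α] (μ : Measure α) {g : α → X}
    (hg : AEStronglyMeasurable g μ) {p : ℝ} (hp : 0 < p) :
    (∫ t, ‖g t‖ ^ p ∂μ) ^ (1/p) = ((∫⁻ t, (‖g t‖₊ : ℝ≥0∞) ^ p ∂μ) ^ (1/p)).toReal := by
  rw [MeasureTheory.integral_eq_lintegral_of_nonneg_ae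
    (Filter.Eventually.of_forall fun t => by positivity)
    ((hg.norm.aemeasurable.pow_const p).aestronglyMeasurable)]
  rw [← ENNReal.toReal_rpow]
  congr 2
  refine lintegral_congr fun t => ?_
  rw [← ENNReal.ofReal_coe_nnreal, coe_nnnorm, ← ENNReal.ofReal_rpow_of_nonneg (norm_nonneg _) hp.le]

lemma lint_ne_top {α : Type*} [MeasurableSpace α] (μ : Measure α) [IsFiniteMeasure μ]
    {f : α → ℝ≥0∞} (M : ℝ≥0∞) (hM : M ≠ ⊤) (hf : ∀ a, f a ≤ M) : ∫⁻ a, f a ∂μ ≠ ⊤ := by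
  refine ne_top_of_le_ne_top (ENNReal.mul_ne_top hM (measure_ne_top μ Set.univ)) ?_
  calc ∫⁻ a, f a ∂μ ≤ ∫⁻ _, M ∂μ := lintegral_mono hf
  _ = M * μ Set.univ := lintegral_const M

lemma norm_le_ennreal {v : X} {B : ℝ} (h : ‖v‖ ≤ B) :
    (‖v‖₊ : ℝ≥0∞) ≤ ENNReal.ofReal B := by
  rw [← ENNReal.ofReal_coe_nnreal, coe_nnnorm]
  exact ENNReal.ofReal_le_ofReal h


lemma mainQ (s r : ℝ) (hs : 1 ≤ s) (hsr : s < r) (c : ℝ) (hc0 : 0 ≤ c) (hc1 : c ≤ 1)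
    (h1' : ∀ (F : Finset ℕ) (y : ℕ → X),
      (∫⁻ t, (‖∑ k ∈ F, ((c : ℂ) * torus t) ^ k • y k‖₊ : ℝ≥0∞) ^ r ∂μ1) ^ (1/r)
        ≤ (∫⁻ t, (‖∑ k ∈ F, (torus t) ^ k • y k‖₊ : ℝ≥0∞) ^ s ∂μ1) ^ (1/s)) :
    ∀ (N : ℕ) (A : Finset (Fin N → ℕ)) (x : (Fin N → ℕ) → X),
      (∫⁻ t, (‖poly N (fun _ => c) A x t‖₊ : ℝ≥0∞) ^ r ∂μp N) ^ (1/r)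
        ≤ (∫⁻ t, (‖poly N (fun _ => (1:ℝ)) A x t‖₊ : ℝ≥0∞) ^ s ∂μp N) ^ (1/s) := by
  have hs0 : (0:ℝ) < s := by linarith
  have hr0 : (0:ℝ) < r := by linarith
  intro N
  induction N with
  | zero =>
    intro A x
    have hpoly : ∀ (d : Fin 0 → ℝ) (t : Fin 0 → ℝ),
        poly 0 d A x t = ∑ α ∈ A, x α := by
      intro d t
      refine Finset.sum_congr rfl fun α _ => ?_
      rw [Finset.univ_eq_empty, Finset.prod_empty, one_smul]
    have hconst : ∀ (d : Fin 0 → ℝ) (p : ℝ), 0 < p →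
        (∫⁻ t, (‖poly 0 d A x t‖₊ : ℝ≥0∞) ^ p ∂μp 0) ^ (1/p)
          = (‖∑ α ∈ A, x α‖₊ : ℝ≥0∞) := by
      intro d p hp
      have he : ∀ t : Fin 0 → ℝ, (‖poly 0 d A x t‖₊ : ℝ≥0∞) ^ p
          = (‖∑ α ∈ A, x α‖₊ : ℝ≥0∞) ^ p := fun t => by rw [hpoly]
      simp only [he]
      rw [lintegral_const, measure_univ, mul_one, ← ENNReal.rpow_mul,
        mul_one_div, div_self hp.ne', ENNReal.rpow_one]
    rw [hconst _ r hr0, hconst _ s hs0]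
  | succ N IH =>
    intro A x
    set dcc : Fin (N+1) → ℝ := fun _ => c with hdcc
    set d1c : Fin (N+1) → ℝ := Fin.cons 1 (fun _ => c) with hd1c
    set d11 : Fin (N+1) → ℝ := fun _ => (1:ℝ) with hd11
    have habs : |c| ≤ 1 := abs_le.mpr ⟨by linarith, hc1⟩
    have hdcc_le : ∀ j, |dcc j| ≤ 1 := fun j => habs
    have hd11_le : ∀ j, |d11 j| ≤ 1 := fun j => by norm_num [hd11]
    have hd1c_le : ∀ j, |d1c j| ≤ 1 := fun j => by
      refine Fin.cases ?_ (fun i => ?_) j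
      · simp [hd1c]
      · simpa [hd1c] using habs
    -- measurability and bounds
    have mf : ∀ (d : Fin (N+1) → ℝ) (p : ℝ),
        Measurable fun t => (‖poly (N+1) d A x t‖₊ : ℝ≥0∞) ^ p := fun d p =>
      ((continuous_poly (N+1) d A x).nnnorm.measurable.coe_nnreal_ennreal).pow_const p
    set M : ℝ≥0∞ := ENNReal.ofReal (∑ α ∈ A, ‖x α‖) with hMdef
    have hM : M ≠ ⊤ := ENNReal.ofReal_ne_top
    have hbd : ∀ (d : Fin (N+1) → ℝ), (∀ j, |d j| ≤ 1) → ∀ t,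
        (‖poly (N+1) d A x t‖₊ : ℝ≥0∞) ≤ M := fun d hd t =>
      norm_le_ennreal (norm_poly_le (N+1) d hd A x t)
    set p : ℝ := r / s with hpdef
    have hp1 : 1 ≤ p := (one_le_div hs0).mpr hsr.le
    have hp0 : (0:ℝ) < p := by positivity
    set B : X → ℝ≥0∞ := fun v => (‖v‖₊ : ℝ≥0∞) with hBdef
    set L : ℝ≥0∞ := ∫⁻ t, B (poly (N+1) dcc A x t) ^ r ∂μp (N+1) with hLdef
    set Rs : ℝ≥0∞ := ∫⁻ t, B (poly (N+1) d11 A x t) ^ s ∂μp (N+1) with hRsdef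
    set J : ℝ≥0∞ := ∫⁻ z, (∫⁻ w, B (poly (N+1) d1c A x (Fin.cons w z)) ^ s ∂μ1) ^ p ∂μp N
      with hJdef
    -- Step A + B : L ≤ J
    have hLJ : L ≤ J := by
      have e0 : L = ∫⁻ z, ∫⁻ w, B (poly (N+1) dcc A x (Fin.cons w z)) ^ r ∂μ1 ∂μp N := by
        rw [hLdef, lint_cons N _ (mf dcc r)]
        exact lintegral_lintegral_swap (measurable_cons_comp (mf dcc r)).aemeasurable
      rw [e0, hJdef]
      refine lintegral_mono fun z => ?_
      -- regroup and apply h1'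
      set F : Finset ℕ := A.image (fun α => α 0) with hF
      set y : ℕ → X := fun k => ∑ α ∈ A.filter (fun α => α 0 = k),
        (∏ j, ((c : ℂ) * torus (z j)) ^ (α j.succ)) • x α with hy
      have e1 : ∀ w, poly (N+1) dcc A x (Fin.cons w z)
          = ∑ k ∈ F, ((c : ℂ) * torus w) ^ k • y k := fun w => key1 N dcc A x w z
      have e2 : ∀ w, poly (N+1) d1c A x (Fin.cons w z)
          = ∑ k ∈ F, (torus w) ^ k • y k := fun w => by
        rw [key1 N d1c A x w z]
        simp only [hd1c, Fin.cons_zero, Fin.cons_succ, Complex.ofReal_one, one_mul]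
        rfl
      simp only [hBdef, e1, e2]
      have h := h1' F y
      calc (∫⁻ w, (‖∑ k ∈ F, ((c:ℂ) * torus w) ^ k • y k‖₊ : ℝ≥0∞) ^ r ∂μ1)
          = ((∫⁻ w, (‖∑ k ∈ F, ((c:ℂ) * torus w) ^ k • y k‖₊ : ℝ≥0∞) ^ r ∂μ1) ^ (1/r)) ^ r := by
            rw [← ENNReal.rpow_mul, show (1/r) * r = 1 by field_simp, ENNReal.rpow_one]
        _ ≤ ((∫⁻ w, (‖∑ k ∈ F, (torus w) ^ k • y k‖₊ : ℝ≥0∞) ^ s ∂μ1) ^ (1/s)) ^ r :=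
            ENNReal.rpow_le_rpow h hr0.le
        _ = (∫⁻ w, (‖∑ k ∈ F, (torus w) ^ k • y k‖₊ : ℝ≥0∞) ^ s ∂μ1) ^ p := by
            rw [← ENNReal.rpow_mul]
            congr 1
            rw [hpdef]; ring
    -- Step C : Minkowski
    have ebr : ∀ v : X, (B v ^ s) ^ p = B v ^ r := fun v => by
      rw [← ENNReal.rpow_mul]
      congr 1
      rw [hpdef]; field_simp
    have mink : J ^ (1/p) ≤ ∫⁻ w, (∫⁻ z, B (poly (N+1) d1c A x (Fin.cons w z)) ^ r
        ∂μp N) ^ (1/p) ∂μ1 := by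
      have hF : Measurable (Function.uncurry fun w z =>
          B (poly (N+1) d1c A x (Fin.cons w z)) ^ s) := measurable_cons_comp (mf d1c s)
      have h := minkowski_lintegral μ1 (μp N) hF (M ^ s)
        (ENNReal.rpow_ne_top_of_nonneg hs0.le hM)
        (fun w z => ENNReal.rpow_le_rpow (hbd d1c hd1c_le (Fin.cons w z)) hs0.le) hp1
      refine le_trans h (le_of_eq (lintegral_congr fun w => ?_))
      congr 1
      exact lintegral_congr fun z => ebr _
    -- Step D : apply IH pointwise in w
    have stepD : ∀ w, (∫⁻ z, B (poly (N+1) d1c A x (Fin.cons w z)) ^ r ∂μp N) ^ (1/p)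
        ≤ ∫⁻ z, B (poly (N+1) d11 A x (Fin.cons w z)) ^ s ∂μp N := by
      intro w
      set y' : (Fin N → ℕ) → X := fun β => ∑ α ∈ A.filter (fun α => Fin.tail α = β),
        (torus w) ^ (α 0) • x α with hy'
      have e3 : ∀ z, poly (N+1) d1c A x (Fin.cons w z)
          = poly N (fun _ => c) (A.image Fin.tail) y' z := fun z => by
        rw [key2 N d1c A x w z]
        simp only [poly, hd1c, Fin.cons_zero, Fin.cons_succ, Complex.ofReal_one, one_mul, hy']
      have e4 : ∀ z, poly (N+1) d11 A x (Fin.cons w z)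
          = poly N (fun _ => (1:ℝ)) (A.image Fin.tail) y' z := fun z => by
        rw [key2 N d11 A x w z]
        simp only [poly, hd11, Complex.ofReal_one, one_mul, hy']
      simp only [hBdef, e3, e4]
      have h := IH (A.image Fin.tail) y'
      rw [show (1:ℝ)/p = s/r by rw [hpdef, one_div_div]]
      calc (∫⁻ z, (‖poly N (fun _ => c) (A.image Fin.tail) y' z‖₊ : ℝ≥0∞) ^ r ∂μp N) ^ (s/r)
          = (((∫⁻ z, (‖poly N (fun _ => c) (A.image Fin.tail) y' z‖₊ : ℝ≥0∞) ^ r ∂μp N)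
              ^ (1/r)) : ℝ≥0∞) ^ s := by
            rw [← ENNReal.rpow_mul]
            congr 1
            ring
        _ ≤ ((∫⁻ z, (‖poly N (fun _ => (1:ℝ)) (A.image Fin.tail) y' z‖₊ : ℝ≥0∞) ^ s ∂μp N)
              ^ (1/s)) ^ s := ENNReal.rpow_le_rpow h hs0.le
        _ = ∫⁻ z, (‖poly N (fun _ => (1:ℝ)) (A.image Fin.tail) y' z‖₊ : ℝ≥0∞) ^ s ∂μp N := by
            rw [← ENNReal.rpow_mul, show (1/s) * s = 1 by field_simp, ENNReal.rpow_one]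
    -- Step E : reassemble
    have stepE : ∫⁻ w, ∫⁻ z, B (poly (N+1) d11 A x (Fin.cons w z)) ^ s ∂μp N ∂μ1 = Rs :=
      (lint_cons N _ (mf d11 s)).symm
    have final : L ^ (1/p) ≤ Rs := by
      calc L ^ (1/p) ≤ J ^ (1/p) := ENNReal.rpow_le_rpow hLJ (by positivity)
        _ ≤ ∫⁻ w, (∫⁻ z, B (poly (N+1) d1c A x (Fin.cons w z)) ^ r ∂μp N) ^ (1/p) ∂μ1 := mink
        _ ≤ ∫⁻ w, ∫⁻ z, B (poly (N+1) d11 A x (Fin.cons w z)) ^ s ∂μp N ∂μ1 :=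
            lintegral_mono fun w => stepD w
        _ = Rs := stepE
    calc (∫⁻ t, (‖poly (N+1) (fun _ => c) A x t‖₊ : ℝ≥0∞) ^ r ∂μp (N+1)) ^ (1/r)
        = (L ^ (1/p)) ^ (1/s) := by
          rw [hLdef, ← ENNReal.rpow_mul]
          congr 1
          rw [hpdef]
          field_simp
      _ ≤ Rs ^ (1/s) := ENNReal.rpow_le_rpow final (by positivity)

lemma one_var_bound (F : Finset ℕ) (y : ℕ → X) (a : ℝ) (ha0 : 0 ≤ a) (ha1 : a ≤ 1) (t : ℝ) :
    ‖∑ k ∈ F, ((a : ℂ) * torus t) ^ k • y k‖ ≤ ∑ k ∈ F, ‖y k‖ := by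
  refine norm_sum_smul_le _ _ _ fun k _ => ?_
  rw [norm_pow]
  refine pow_le_one₀ (norm_nonneg _) ?_
  rw [norm_mul, norm_torus, mul_one, Complex.norm_real, Real.norm_eq_abs, abs_of_nonneg ha0]
  exact ha1

lemma one_var_cont (F : Finset ℕ) (y : ℕ → X) (a : ℂ) :
    Continuous fun t => ∑ k ∈ F, (a * torus t) ^ k • y k :=
  continuous_finset_sum _ fun k _ =>
    ((continuous_const.mul continuous_torus).pow k).smul continuous_const

end WeisslerAux

open WeisslerAux ENNReal

/-- Iterating the one-variable Weissler contraction: if for all `X`-valued analytic polynomials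
`g` on `𝕋` one has `‖g(c·)‖_{L^r} ≤ ‖g‖_{L^s}` (with `1 ≤ s < r < ∞`, `c = √(s/r)`), then the
same contraction holds for all `X`-valued analytic polynomials on `𝕋^N`, for every `N`. -/
theorem weissler_iteration
    (X : Type*) [NormedAddCommGroup X] [NormedSpace ℂ X] [CompleteSpace X]
    (s r : ℝ) (hs : 1 ≤ s) (hsr : s < r) (c : ℝ) (hc : c = Real.sqrt (s / r))
    (h1 : ∀ (F : Finset ℕ) (x : ℕ → X),
      (∫ t in Set.Icc (0:ℝ) 1, ‖∑ k ∈ F, ((c : ℂ) * torus t) ^ k • x k‖ ^ r) ^ (1/r)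
        ≤ (∫ t in Set.Icc (0:ℝ) 1, ‖∑ k ∈ F, (torus t) ^ k • x k‖ ^ s) ^ (1/s)) :
    ∀ (N : ℕ) (A : Finset (Fin N → ℕ)) (x : (Fin N → ℕ) → X),
      (∫ t in cube N, ‖∑ α ∈ A, (∏ j, ((c : ℂ) * torus (t j)) ^ α j) • x α‖ ^ r) ^ (1/r)
        ≤ (∫ t in cube N, ‖∑ α ∈ A, (∏ j, torus (t j) ^ α j) • x α‖ ^ s) ^ (1/s) := by
  have hs0 : (0:ℝ) < s := by linarith
  have hr0 : (0:ℝ) < r := by linarith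
  have hc0 : 0 ≤ c := hc ▸ Real.sqrt_nonneg _
  have hc1 : c ≤ 1 := by
    rw [hc, show (1:ℝ) = Real.sqrt 1 by rw [Real.sqrt_one]]
    exact Real.sqrt_le_sqrt (by rw [div_le_one hr0]; linarith)
  -- the one-variable hypothesis in `lintegral` form
  have h1' : ∀ (F : Finset ℕ) (y : ℕ → X),
      (∫⁻ t, (‖∑ k ∈ F, ((c : ℂ) * torus t) ^ k • y k‖₊ : ℝ≥0∞) ^ r ∂μ1) ^ (1/r)
        ≤ (∫⁻ t, (‖∑ k ∈ F, (torus t) ^ k • y k‖₊ : ℝ≥0∞) ^ s ∂μ1) ^ (1/s) := by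
    intro F y
    have h := h1 F y
    have hgc := one_var_cont F y (c : ℂ)
    have hg1 : Continuous fun t => ∑ k ∈ F, (torus t) ^ k • y k := by
      have := one_var_cont F y (1 : ℂ)
      simpa using this
    rw [conv μ1 hgc.aestronglyMeasurable hr0] at h
    rw [conv μ1 hg1.aestronglyMeasurable hs0] at h
    have hfinr : (∫⁻ t, (‖∑ k ∈ F, ((c : ℂ) * torus t) ^ k • y k‖₊ : ℝ≥0∞) ^ r ∂μ1) ≠ ⊤ := by
      refine lint_ne_top μ1 ((ENNReal.ofReal (∑ k ∈ F, ‖y k‖)) ^ r)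
        (ENNReal.rpow_ne_top_of_nonneg hr0.le ENNReal.ofReal_ne_top) fun t => ?_
      exact ENNReal.rpow_le_rpow (norm_le_ennreal (one_var_bound F y c hc0 hc1 t)) hr0.le
    have hfins : (∫⁻ t, (‖∑ k ∈ F, (torus t) ^ k • y k‖₊ : ℝ≥0∞) ^ s ∂μ1) ≠ ⊤ := by
      refine lint_ne_top μ1 ((ENNReal.ofReal (∑ k ∈ F, ‖y k‖)) ^ s)
        (ENNReal.rpow_ne_top_of_nonneg hs0.le ENNReal.ofReal_ne_top) fun t => ?_
      refine ENNReal.rpow_le_rpow (norm_le_ennreal ?_) hs0.le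
      have := one_var_bound F y 1 zero_le_one le_rfl t
      simpa using this
    exact (ENNReal.toReal_le_toReal
      (ENNReal.rpow_ne_top_of_nonneg (by positivity) hfinr)
      (ENNReal.rpow_ne_top_of_nonneg (by positivity) hfins)).mp h
  intro N A x
  have hQ := mainQ s r hs hsr c hc0 hc1 h1' N A x
  have e2 : ∀ t : Fin N → ℝ, (∑ α ∈ A, (∏ j, torus (t j) ^ α j) • x α)
      = poly N (fun _ => (1:ℝ)) A x t := fun t => by simp [poly]
  have e1 : ∀ t : Fin N → ℝ, (∑ α ∈ A, (∏ j, ((c:ℂ) * torus (t j)) ^ α j) • x α)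
      = poly N (fun _ => c) A x t := fun t => rfl
  calc (∫ t in cube N, ‖∑ α ∈ A, (∏ j, ((c : ℂ) * torus (t j)) ^ α j) • x α‖ ^ r) ^ (1/r)
      = ((∫⁻ t, (‖poly N (fun _ => c) A x t‖₊ : ℝ≥0∞) ^ r ∂μp N) ^ (1/r)).toReal := by
        rw [show (∫ t in cube N, ‖∑ α ∈ A, (∏ j, ((c : ℂ) * torus (t j)) ^ α j) • x α‖ ^ r)
            = ∫ t, ‖poly N (fun _ => c) A x t‖ ^ r ∂μp N by rw [← restrict_cube N]; rfl]
        exact conv (μp N) (continuous_poly N _ A x).aestronglyMeasurable hr0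
    _ ≤ ((∫⁻ t, (‖poly N (fun _ => (1:ℝ)) A x t‖₊ : ℝ≥0∞) ^ s ∂μp N) ^ (1/s)).toReal := by
        refine ENNReal.toReal_mono ?_ hQ
        refine ENNReal.rpow_ne_top_of_nonneg (by positivity) ?_
        refine lint_ne_top (μp N) ((ENNReal.ofReal (∑ α ∈ A, ‖x α‖)) ^ s)
          (ENNReal.rpow_ne_top_of_nonneg hs0.le ENNReal.ofReal_ne_top) fun t => ?_
        refine ENNReal.rpow_le_rpow (norm_le_ennreal
          (norm_poly_le N _ (fun j => by norm_num) A x t)) hs0.le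
    _ = (∫ t in cube N, ‖∑ α ∈ A, (∏ j, torus (t j) ^ α j) • x α‖ ^ s) ^ (1/s) := by
        rw [show (∫ t in cube N, ‖∑ α ∈ A, (∏ j, torus (t j) ^ α j) • x α‖ ^ s)
            = ∫ t, ‖poly N (fun _ => (1:ℝ)) A x t‖ ^ s ∂μp N by
          rw [← restrict_cube N]
          exact integral_congr_ae (Filter.Eventually.of_forall fun t => congrArg (fun v : X => ‖v‖ ^ s) (e2 t))]
        exact (conv (μp N) (continuous_poly N _ A x).aestronglyMeasurable hs0).symm
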